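/- End(H_p) is isomorphic as a ring to the quotient R_p / K, where K = {(a_{ij}) ∈ R_p : p^{e_i} ∣ a_{ij} for all i, j}. -/

import Mathlib

/-- The subring `R_p` of integer matrices with `p ^ (e i - e j) ∣ A i j` for `j ≤ i`. -/
def Rp (p n : ℕ) (e : Fin n → ℕ) (he : Monotone e) :
    Subring (Matrix (Fin n) (Fin n) ℤ) where
  carrier := {A | ∀ i j, j ≤ i → ((p : ℤ) ^ (e i - e j)) ∣ A i j}
  zero_mem' := by intro i j _; simp
  one_mem' := by
    intro i j hji
    rcases eq_or_ne i j with rfl | hne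
    · simp
    · simp [Matrix.one_apply, hne]
  add_mem' := by
    intro A B hA hB i j h
    simpa [Matrix.add_apply] using dvd_add (hA i j h) (hB i j h)
  neg_mem' := by
    intro A hA i j h
    simpa [Matrix.neg_apply] using (hA i j h).neg_right
  mul_mem' := by
    intro A B hA hB i j hji
    rw [Matrix.mul_apply]
    refine Finset.dvd_sum fun k _ => ?_
    rcases le_total k j with hk | hk
    · exact dvd_mul_of_dvd_left
        ((pow_dvd_pow _ (Nat.sub_le_sub_left (he hk) _)).trans (hA i k (hk.trans hji))) _
    · rcases le_total k i with hki | hki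
      · have h3 : (p : ℤ) ^ (e i - e j) ∣ (p : ℤ) ^ (e i - e k) * (p : ℤ) ^ (e k - e j) := by
          rw [← pow_add]
          apply pow_dvd_pow
          have := he hki; have := he hk; omega
        exact h3.trans (mul_dvd_mul (hA i k hki) (hB k j hk))
      · exact dvd_mul_of_dvd_right
          ((pow_dvd_pow _ (Nat.sub_le_sub_right (he hki) _)).trans (hB k j hk)) _

/-- The two-sided ideal `K = {A ∈ R_p : p ^ (e i) ∣ A i j for all i, j}`. -/
def Kideal (p n : ℕ) (e : Fin n → ℕ) (he : Monotone e) :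
    TwoSidedIdeal (Rp p n e he) :=
  TwoSidedIdeal.mk'
    {A | ∀ i j, ((p : ℤ) ^ e i) ∣ (A : Matrix (Fin n) (Fin n) ℤ) i j}
    (by intro i j; simp)
    (by
      intro x y hx hy i j
      push_cast
      simpa [Matrix.add_apply] using dvd_add (hx i j) (hy i j))
    (by
      intro x hx i j
      push_cast
      simpa [Matrix.neg_apply] using (hx i j).neg_right)
    (by
      intro x y hy i j
      have hx : ∀ i j, j ≤ i → ((p : ℤ) ^ (e i - e j)) ∣ (x : Matrix (Fin n) (Fin n) ℤ) i j :=
        x.2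
      show ((p : ℤ) ^ e i) ∣ ((x : Matrix (Fin n) (Fin n) ℤ) * (y : Matrix (Fin n) (Fin n) ℤ)) i j
      rw [Matrix.mul_apply]
      refine Finset.dvd_sum fun k _ => ?_
      rcases le_total k i with hk | hk
      · refine dvd_trans ?_ (mul_dvd_mul (hx i k hk) (hy k j))
        rw [← pow_add]
        apply pow_dvd_pow
        have := he hk; omega
      · exact dvd_mul_of_dvd_right ((pow_dvd_pow _ (he hk)).trans (hy k j)) _)
    (by
      intro x y hx i j
      show ((p : ℤ) ^ e i) ∣ ((x : Matrix (Fin n) (Fin n) ℤ) * (y : Matrix (Fin n) (Fin n) ℤ)) i j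
      rw [Matrix.mul_apply]
      exact Finset.dvd_sum fun k _ => dvd_mul_of_dvd_left (hx i k) _)

namespace Stmt10Aux

variable (p n : ℕ) (e : Fin n → ℕ) (he : Monotone e)

lemma key_dvd (A : Rp p n e he) (i j : Fin n) :
    ((p : ℤ) ^ e i) ∣ (A : Matrix (Fin n) (Fin n) ℤ) i j * (p : ℤ) ^ e j := by
  rcases le_total j i with h | h
  · have h1 := A.2 i j h
    have h2 : (p : ℤ) ^ e i = (p : ℤ) ^ (e i - e j) * (p : ℤ) ^ e j := by
      rw [← pow_add]; congr 1; have := he h; omega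
    rw [h2]; exact mul_dvd_mul h1 dvd_rfl
  · exact dvd_mul_of_dvd_right (pow_dvd_pow _ (he h)) _

/-- The additive hom `ZMod (p ^ e j) →+ ZMod (p ^ e i)` given by multiplication by `A i j`. -/
def entry (A : Rp p n e he) (i j : Fin n) : ZMod (p ^ e j) →+ ZMod (p ^ e i) :=
  ZMod.lift _ ⟨(Int.castAddHom _).comp (AddMonoidHom.mulLeft ((A : Matrix (Fin n) (Fin n) ℤ) i j)),
    by
      simp only [AddMonoidHom.comp_apply, AddMonoidHom.coe_mulLeft, Int.coe_castAddHom]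
      rw [ZMod.intCast_zmod_eq_zero_iff_dvd]
      push_cast
      exact key_dvd p n e he A i j⟩

lemma entry_cast (A : Rp p n e he) (i j : Fin n) (m : ℤ) :
    entry p n e he A i j ((m : ZMod (p ^ e j))) =
      (((A : Matrix (Fin n) (Fin n) ℤ) i j * m : ℤ) : ZMod (p ^ e i)) :=
  ZMod.lift_coe _ _ m

/-- The ring hom `Rp →+* End (∏ ZMod (p ^ e i))`. -/
def F : Rp p n e he →+* AddMonoid.End (∀ i : Fin n, ZMod (p ^ e i)) where
  toFun A := AddMonoidHom.mk' (fun f i => ∑ j, entry p n e he A i j (f j))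
    (by intro f g; funext i; simp [map_add, Finset.sum_add_distrib])
  map_one' := by
    refine AddMonoidHom.ext fun f => ?_
    funext i
    obtain ⟨m, hm⟩ : ∃ m : Fin n → ℤ, ∀ j, (m j : ZMod (p ^ e j)) = f j := by
      choose m hm using fun j => ZMod.intCast_surjective (f j)
      exact ⟨m, hm⟩
    show ∑ j, entry p n e he 1 i j (f j) = f i
    have : ∀ j, entry p n e he 1 i j (f j) =
        (((1 : Matrix (Fin n) (Fin n) ℤ) i j * m j : ℤ) : ZMod (p ^ e i)) := by
      intro j; rw [← hm j, entry_cast]; rfl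
    rw [Finset.sum_congr rfl fun j _ => this j, ← hm i, ← Int.cast_sum]
    congr 1
    simp [Matrix.one_apply, ite_mul]
  map_mul' := by
    intro A B
    refine AddMonoidHom.ext fun f => ?_
    funext i
    obtain ⟨m, hm⟩ : ∃ m : Fin n → ℤ, ∀ j, (m j : ZMod (p ^ e j)) = f j := by
      choose m hm using fun j => ZMod.intCast_surjective (f j)
      exact ⟨m, hm⟩
    show ∑ j, entry p n e he (A * B) i j (f j) =
      ∑ k, entry p n e he A i k (∑ j, entry p n e he B k j (f j))
    have hB : ∀ k, ∑ j, entry p n e he B k j (f j) =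
        ((∑ j, (B : Matrix (Fin n) (Fin n) ℤ) k j * m j : ℤ) : ZMod (p ^ e k)) := by
      intro k
      rw [Int.cast_sum]
      refine Finset.sum_congr rfl fun j _ => ?_
      rw [← hm j, entry_cast]
    have hR : ∀ k, entry p n e he A i k (∑ j, entry p n e he B k j (f j)) =
        (((A : Matrix (Fin n) (Fin n) ℤ) i k *
          ∑ j, (B : Matrix (Fin n) (Fin n) ℤ) k j * m j : ℤ) : ZMod (p ^ e i)) := by
      intro k; rw [hB k, entry_cast]
    have hL : ∀ j, entry p n e he (A * B) i j (f j) =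
        ((((A : Matrix (Fin n) (Fin n) ℤ) * (B : Matrix (Fin n) (Fin n) ℤ)) i j * m j : ℤ)
          : ZMod (p ^ e i)) := by
      intro j; rw [← hm j, entry_cast]; push_cast; ring_nf
    rw [Finset.sum_congr rfl fun j _ => hL j, Finset.sum_congr rfl fun k _ => hR k,
      ← Int.cast_sum, ← Int.cast_sum]
    congr 1
    simp only [Matrix.mul_apply, Finset.sum_mul, Finset.mul_sum]
    rw [Finset.sum_comm]
    refine Finset.sum_congr rfl fun j _ => Finset.sum_congr rfl fun k _ => ?_
    ring
  map_zero' := by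
    refine AddMonoidHom.ext fun f => ?_
    funext i
    show ∑ j, entry p n e he 0 i j (f j) = 0
    refine Finset.sum_eq_zero fun j _ => ?_
    obtain ⟨m, hm⟩ := ZMod.intCast_surjective (f j)
    rw [← hm, entry_cast]
    push_cast
    simp
  map_add' := by
    intro A B
    refine AddMonoidHom.ext fun f => ?_
    funext i
    show ∑ j, entry p n e he (A + B) i j (f j) =
      ∑ j, entry p n e he A i j (f j) + ∑ j, entry p n e he B i j (f j)
    rw [← Finset.sum_add_distrib]
    refine Finset.sum_congr rfl fun j _ => ?_
    obtain ⟨m, hm⟩ := ZMod.intCast_surjective (f j)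
    rw [← hm, entry_cast, entry_cast, entry_cast]
    rw [show ((A + B : Rp p n e he) : Matrix (Fin n) (Fin n) ℤ) i j
        = (A : Matrix (Fin n) (Fin n) ℤ) i j + (B : Matrix (Fin n) (Fin n) ℤ) i j from rfl]
    push_cast
    ring

lemma F_single (A : Rp p n e he) (j : Fin n) (x : ZMod (p ^ e j)) (i : Fin n) :
    F p n e he A (Pi.single j x) i = entry p n e he A i j x := by
  show ∑ j', entry p n e he A i j' ((Pi.single j x : ∀ k : Fin n, ZMod (p ^ e k)) j')
      = entry p n e he A i j x
  rw [Finset.sum_eq_single j (fun j' _ hj' => by rw [Pi.single_eq_of_ne hj', map_zero])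
    (fun h => absurd (Finset.mem_univ j) h), Pi.single_eq_same]

lemma F_eq_zero_iff (A : Rp p n e he) :
    F p n e he A = 0 ↔ ∀ i j, ((p : ℤ) ^ e i) ∣ (A : Matrix (Fin n) (Fin n) ℤ) i j := by
  constructor
  · intro h i j
    have h1 : entry p n e he A i j ((1 : ℤ) : ZMod (p ^ e j)) = 0 := by
      rw [show ((1 : ℤ) : ZMod (p ^ e j)) = (1 : ZMod (p ^ e j)) by push_cast; rfl,
        ← F_single p n e he A j 1 i, h]
      rfl
    rw [entry_cast, mul_one, ZMod.intCast_zmod_eq_zero_iff_dvd] at h1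
    push_cast at h1
    exact h1
  · intro h
    refine AddMonoidHom.ext fun f => ?_
    funext i
    show ∑ j, entry p n e he A i j (f j) = 0
    refine Finset.sum_eq_zero fun j _ => ?_
    obtain ⟨m, hm⟩ := ZMod.intCast_surjective (f j)
    rw [← hm, entry_cast, ZMod.intCast_zmod_eq_zero_iff_dvd]
    push_cast
    exact Dvd.dvd.mul_right (h i j) m

lemma F_surjective (hp : p.Prime) :
    Function.Surjective (F p n e he) := by
  intro φ
  have hNZ : ∀ i : Fin n, NeZero (p ^ e i) := fun i => ⟨pow_ne_zero _ hp.ne_zero⟩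
  set M : Matrix (Fin n) (Fin n) ℤ :=
    fun i j => ((φ (Pi.single j 1) i).val : ℤ) with hMdef
  have hvM : ∀ i j, ((M i j : ℤ) : ZMod (p ^ e i)) = φ (Pi.single j 1) i := by
    intro i j
    haveI := hNZ i
    show (((φ (Pi.single j 1) i).val : ℤ) : ZMod (p ^ e i)) = φ (Pi.single j 1) i
    push_cast
    rw [ZMod.natCast_val, ZMod.cast_id]
  have hkill : ∀ i j : Fin n, (p : ℕ) ^ e j • φ (Pi.single j 1) i = 0 := by
    intro i j
    have h0 : (p : ℕ) ^ e j • (Pi.single j (1 : ZMod (p ^ e j)) :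
        ∀ k : Fin n, ZMod (p ^ e k)) = 0 := by
      funext k
      rcases eq_or_ne k j with rfl | hk
      · simp [Pi.single_eq_same, nsmul_eq_mul]
      · simp [Pi.single_eq_of_ne hk]
    calc (p : ℕ) ^ e j • φ (Pi.single j 1) i
        = φ ((p : ℕ) ^ e j • Pi.single j 1) i := by rw [map_nsmul]; rfl
      _ = 0 := by rw [h0, map_zero]; rfl
  have hdvd : ∀ i j : Fin n, (p : ℕ) ^ e i ∣ p ^ e j * (φ (Pi.single j 1) i).val := by
    intro i j
    have h1 := hkill i j
    rw [nsmul_eq_mul] at h1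
    have h2 : ((p ^ e j * (φ (Pi.single j 1) i).val : ℕ) : ZMod (p ^ e i)) = 0 := by
      haveI := hNZ i
      push_cast
      rw [ZMod.natCast_val, ZMod.cast_id]
      exact_mod_cast h1
    rwa [ZMod.natCast_eq_zero_iff] at h2
  have hmem : M ∈ Rp p n e he := by
    intro i j hji
    have hej : e j ≤ e i := he hji
    have h1 : p ^ e j * p ^ (e i - e j) ∣ p ^ e j * (φ (Pi.single j 1) i).val := by
      rw [← pow_add]
      have heq : e j + (e i - e j) = e i := by omega
      rw [heq]
      exact hdvd i j
    have h2 : p ^ (e i - e j) ∣ (φ (Pi.single j 1) i).val :=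
      (mul_dvd_mul_iff_left (pow_ne_zero (e j) hp.ne_zero)).1 h1
    have h3 := Int.natCast_dvd_natCast.2 h2
    show ((p : ℤ)) ^ (e i - e j) ∣ M i j
    push_cast at h3 ⊢
    exact h3
  refine ⟨⟨M, hmem⟩, ?_⟩
  have hsingle : ∀ (j : Fin n) (x : ZMod (p ^ e j)),
      F p n e he ⟨M, hmem⟩ (Pi.single j x) = φ (Pi.single j x) := by
    intro j x
    obtain ⟨m, rfl⟩ := ZMod.intCast_surjective x
    have hx : (Pi.single j ((m : ZMod (p ^ e j))) : ∀ k : Fin n, ZMod (p ^ e k)) =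
        m • Pi.single j 1 := by
      funext k
      rcases eq_or_ne k j with rfl | hk
      · simp [Pi.single_eq_same, zsmul_eq_mul]
      · simp [Pi.single_eq_of_ne hk]
    funext i
    rw [F_single, entry_cast, hx, map_zsmul, Pi.smul_apply, zsmul_eq_mul, ← hvM i j]
    push_cast
    ring
  refine AddMonoidHom.ext fun f => ?_
  conv_lhs => rw [← Finset.univ_sum_single f]
  conv_rhs => rw [← Finset.univ_sum_single f]
  exact (map_sum _ _ _).trans
    ((Finset.sum_congr rfl fun j _ => hsingle j (f j)).trans (map_sum _ _ _).symm)

end Stmt10Aux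

/-- `End(H_p)` is isomorphic as a ring to the quotient `R_p / K`,
where `K = {A ∈ R_p : p ^ (e i) ∣ A i j for all i, j}`. -/
theorem stmt_10 (p n : ℕ) (hp : p.Prime) (e : Fin n → ℕ)
    (he1 : ∀ i, 1 ≤ e i) (he : Monotone e) :
    Nonempty
      (AddMonoid.End (∀ i : Fin n, ZMod (p ^ e i)) ≃+*
        (Kideal p n e he).ringCon.Quotient) := by
  classical
  set c := (Kideal p n e he).ringCon with hc
  have hrel : ∀ x y : Rp p n e he, c x y ↔ Stmt10Aux.F p n e he x = Stmt10Aux.F p n e he y := by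
    intro x y
    rw [hc, TwoSidedIdeal.rel_iff, Kideal]
    refine (TwoSidedIdeal.mem_mk' _ _ _ _ _ _ _).trans ?_
    constructor
    · intro h
      have h0 : Stmt10Aux.F p n e he (x - y) = 0 := by
        rw [Stmt10Aux.F_eq_zero_iff]
        intro i j
        simpa using h i j
      rw [RingHom.map_sub, sub_eq_zero] at h0
      exact h0
    · intro h i j
      have h0 : Stmt10Aux.F p n e he (x - y) = 0 := by
        rw [RingHom.map_sub, sub_eq_zero]; exact h
      rw [Stmt10Aux.F_eq_zero_iff] at h0
      simpa using h0 i j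
  let G : c.Quotient →+* AddMonoid.End (∀ i : Fin n, ZMod (p ^ e i)) :=
    { toFun := Quotient.lift (Stmt10Aux.F p n e he) (fun a b h => (hrel a b).1 h)
      map_one' := map_one (Stmt10Aux.F p n e he)
      map_mul' := fun a b => Quotient.inductionOn₂ a b fun x y => map_mul (Stmt10Aux.F p n e he) x y
      map_zero' := map_zero (Stmt10Aux.F p n e he)
      map_add' := fun a b => Quotient.inductionOn₂ a b fun x y =>
        map_add (Stmt10Aux.F p n e he) x y }
  have hbij : Function.Bijective G := by
    constructor
    · intro a b
      refine Quotient.inductionOn₂ a b fun x y h => ?_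
      exact Quotient.sound ((hrel x y).2 h)
    · intro φ
      obtain ⟨A, hA⟩ := Stmt10Aux.F_surjective p n e he hp φ
      exact ⟨(A : c.Quotient), hA⟩
  exact ⟨(RingEquiv.ofBijective G hbij).symm⟩
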